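/- arXiv:math/0302242 — 6 statements merged into one kernel-verified Lean document; each statement's English description precedes it below -/
import Mathlib

section
/- For nonnegative reals λ₁, …, λₙ with λᵢλⱼ ≤ 1-δ for all i ≠ j (where 0 < δ ≤ 1), and any real numbers h_{α,i,k} (indexed by α in a finite set, i,k in {1,…,n}), the quantity Σ_{α,i,k} h_{α,i,k}² + Σ_{k,i} λᵢ² h_{n+i,i,k}² + 2Σ_{k, i<j} λᵢλⱼ h_{n+j,i,k} h_{n+i,j,k} is at least δ·Σ_{α,i,k} h_{α,i,k}². -/
open Finset

private lemma sum_dite_le_aux {n m : ℕ} (G : Fin m → ℝ) (hG : ∀ α, 0 ≤ G α) :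
    ∑ i : Fin n, (if hi : (i : ℕ) < m then G ⟨i, hi⟩ else 0) ≤ ∑ α, G α := by
  have hFnn : ∀ i : ℕ, 0 ≤ (if h : i < m then G ⟨i, h⟩ else 0) := by
    intro i; split_ifs with h
    · exact hG _
    · exact le_rfl
  calc ∑ i : Fin n, (if hi : (i : ℕ) < m then G ⟨i, hi⟩ else 0)
      = ∑ i ∈ range n, (if h : i < m then G ⟨i, h⟩ else 0) := (Finset.sum_range (fun i => if h : i < m then G ⟨i, h⟩ else 0)).symm
    _ = ∑ i ∈ (range n).filter (· < m), (if h : i < m then G ⟨i, h⟩ else 0) := by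
        refine (Finset.sum_filter_of_ne ?_).symm
        intro x _ hx
        by_contra hc
        exact hx (dif_neg hc)
    _ ≤ ∑ i ∈ range m, (if h : i < m then G ⟨i, h⟩ else 0) := by
        refine Finset.sum_le_sum_of_subset_of_nonneg ?_ (fun i _ _ => hFnn i)
        intro x hx
        simp only [mem_filter, mem_range] at hx ⊢
        exact hx.2
    _ = ∑ α : Fin m, G α := by
        rw [Finset.sum_range]
        exact Finset.sum_congr rfl (fun α _ => by simp)

open Finset in
/-- The good quadratic term in the evolution equation of `ln *Ω` is bounded below by `δ|A|²`. -/
theorem second_fundamental_form_estimate (n m : ℕ) (l : Fin n → ℝ) (hl : ∀ i, 0 ≤ l i)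
    (δ : ℝ) (hδ : 0 < δ) (hδ1 : δ ≤ 1)
    (harea : ∀ i j : Fin n, i ≠ j → l i * l j ≤ 1 - δ)
    (A : Fin m → Fin n → Fin n → ℝ)
    (h : Fin n → Fin n → Fin n → ℝ)
    (hh : ∀ i : Fin n, ∀ j k : Fin n,
      h i j k = if hi : (i : ℕ) < m then A ⟨i, hi⟩ j k else 0) :
    δ * (∑ α, ∑ i, ∑ k, A α i k ^ 2) ≤
      (∑ α, ∑ i, ∑ k, A α i k ^ 2) + (∑ k, ∑ i, l i ^ 2 * h i i k ^ 2)
        + 2 * ∑ k, ∑ i, ∑ j ∈ univ.filter (fun j => i < j),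
            l i * l j * h j i k * h i j k := by
  set S := ∑ α, ∑ i, ∑ k, A α i k ^ 2 with hSdef
  -- full sum of squares of h is at most S
  have hD : (∑ i : Fin n, ∑ j, ∑ k, h i j k ^ 2) ≤ S := by
    have key := sum_dite_le_aux (n := n) (m := m)
      (fun α => ∑ j, ∑ k, A α j k ^ 2) (fun α => by positivity)
    refine le_trans (le_of_eq ?_) key
    refine Finset.sum_congr rfl fun i _ => ?_
    by_cases hi : (i : ℕ) < m
    · rw [dif_pos hi]
      exact Finset.sum_congr rfl fun j _ => Finset.sum_congr rfl fun k _ => by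
        rw [hh, dif_pos hi]
    · rw [dif_neg hi]
      simp [hh, hi]
  -- swap lemma
  have hswap : ∀ g : Fin n → Fin n → ℝ,
      (∑ i, ∑ j ∈ univ.filter (fun j => i < j), g i j)
        = ∑ i, ∑ j ∈ univ.filter (fun j => j < i), g j i := by
    intro g
    rw [show (∑ i, ∑ j ∈ univ.filter (fun j => i < j), g i j)
        = ∑ i, ∑ j : Fin n, if i < j then g i j else 0 from
      Finset.sum_congr rfl fun i _ => Finset.sum_filter _ _]
    rw [Finset.sum_comm]
    exact Finset.sum_congr rfl fun i _ => (Finset.sum_filter _ _).symm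
  -- off-diagonal square sum ≤ full square sum, per k
  have hE : ∀ k : Fin n,
      (∑ i, ∑ j ∈ univ.filter (fun j => i < j), (h j i k ^ 2 + h i j k ^ 2))
        ≤ ∑ i, ∑ j, h i j k ^ 2 := by
    intro k
    have h1 : (∑ i, ∑ j ∈ univ.filter (fun j => i < j), (h j i k ^ 2 + h i j k ^ 2))
        = ∑ i, (∑ j ∈ univ.filter (fun j => j < i), h i j k ^ 2
            + ∑ j ∈ univ.filter (fun j => i < j), h i j k ^ 2) := by
      rw [show (∑ i, ∑ j ∈ univ.filter (fun j => i < j), (h j i k ^ 2 + h i j k ^ 2))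
          = (∑ i, ∑ j ∈ univ.filter (fun j => i < j), h j i k ^ 2)
            + ∑ i, ∑ j ∈ univ.filter (fun j => i < j), h i j k ^ 2 by
        rw [← Finset.sum_add_distrib]
        exact Finset.sum_congr rfl fun i _ => Finset.sum_add_distrib]
      rw [hswap (fun i j => h j i k ^ 2)]
      rw [← Finset.sum_add_distrib]
    rw [h1]
    refine Finset.sum_le_sum fun i _ => ?_
    have hdisj : Disjoint (univ.filter (fun j : Fin n => j < i))
        (univ.filter (fun j : Fin n => i < j)) := by
      rw [Finset.disjoint_left]
      intro a ha hb
      simp only [mem_filter] at ha hb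
      exact lt_asymm ha.2 hb.2
    rw [← Finset.sum_union hdisj]
    exact Finset.sum_le_sum_of_subset_of_nonneg (Finset.subset_univ _)
      (fun j _ _ => sq_nonneg _)
  -- cross-term bound, per k
  have hC : ∀ k : Fin n,
      -(1 - δ) * (∑ i, ∑ j ∈ univ.filter (fun j => i < j), (h j i k ^ 2 + h i j k ^ 2))
        ≤ 2 * ∑ i, ∑ j ∈ univ.filter (fun j => i < j),
            l i * l j * h j i k * h i j k := by
    intro k
    rw [Finset.mul_sum, Finset.mul_sum]
    refine Finset.sum_le_sum fun i _ => ?_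
    rw [Finset.mul_sum, Finset.mul_sum]
    refine Finset.sum_le_sum fun j hj => ?_
    simp only [mem_filter] at hj
    have hij : i ≠ j := ne_of_lt hj.2
    have hc1 : 0 ≤ l i * l j := mul_nonneg (hl i) (hl j)
    have hc2 : l i * l j ≤ 1 - δ := harea i j hij
    nlinarith [mul_nonneg hc1 (sq_nonneg (h j i k + h i j k)),
      mul_nonneg (sub_nonneg.2 hc2)
        (add_nonneg (sq_nonneg (h j i k)) (sq_nonneg (h i j k)))]
  set Etot := ∑ k : Fin n, ∑ i, ∑ j ∈ univ.filter (fun j => i < j),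
      (h j i k ^ 2 + h i j k ^ 2) with hEdef
  set Ctot := ∑ k : Fin n, ∑ i, ∑ j ∈ univ.filter (fun j => i < j),
      l i * l j * h j i k * h i j k with hCdef
  have h2C : -(1 - δ) * Etot ≤ 2 * Ctot := by
    rw [hEdef, hCdef, Finset.mul_sum, Finset.mul_sum]
    exact Finset.sum_le_sum fun k _ => hC k
  have hES : Etot ≤ S := by
    calc Etot ≤ ∑ k : Fin n, ∑ i, ∑ j, h i j k ^ 2 :=
          Finset.sum_le_sum fun k _ => hE k
      _ = ∑ i : Fin n, ∑ j, ∑ k, h i j k ^ 2 := by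
          rw [Finset.sum_comm]
          exact Finset.sum_congr rfl fun i _ => Finset.sum_comm
      _ ≤ S := hD
  have hT : 0 ≤ ∑ k : Fin n, ∑ i, l i ^ 2 * h i i k ^ 2 := by positivity
  have hmul : (1 - δ) * Etot ≤ (1 - δ) * S :=
    mul_le_mul_of_nonneg_left hES (by linarith)
  linarith
end

section
/- Let P be a self-adjoint operator on an n-dimensional inner product space (n ≥ 2). Then P^[2] is positive definite if and only if the sum of any two eigenvalues of P is positive (P is two-positive). -/
open Matrix Finset

namespace TwoPosAux

variable {n : ℕ}

/-- extend a vector indexed by ordered pairs to an antisymmetric matrix -/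
noncomputable def ext (x : {p : Fin n × Fin n // p.1 < p.2} → ℝ) :
    Matrix (Fin n) (Fin n) ℝ := fun a b =>
  ∑ p : {p : Fin n × Fin n // p.1 < p.2}, x p *
    ((if a = p.1.1 then (1:ℝ) else 0) * (if b = p.1.2 then 1 else 0)
      - (if a = p.1.2 then (1:ℝ) else 0) * (if b = p.1.1 then 1 else 0))

def restrict (M : Matrix (Fin n) (Fin n) ℝ) (p : {p : Fin n × Fin n // p.1 < p.2}) : ℝ :=
  M p.1.1 p.1.2

lemma delta1 (x : {p : Fin n × Fin n // p.1 < p.2} → ℝ) (a b : Fin n) :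
    (∑ q : {p : Fin n × Fin n // p.1 < p.2}, x q *
      ((if a = q.1.1 then (1:ℝ) else 0) * (if b = q.1.2 then 1 else 0)))
    = if h : a < b then x ⟨(a,b), h⟩ else 0 := by
  split_ifs with h
  · rw [Finset.sum_eq_single (⟨(a,b), h⟩ : {p : Fin n × Fin n // p.1 < p.2})]
    · simp
    · rintro ⟨⟨c,d⟩, hcd⟩ - hq
      by_cases hac : a = c
      · by_cases hbd : b = d
        · subst hac; subst hbd; exact absurd rfl hq
        · simp [hbd]
      · simp [hac]
    · simp
  · apply Finset.sum_eq_zero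
    rintro ⟨⟨c,d⟩, hcd⟩ -
    by_cases hac : a = c
    · by_cases hbd : b = d
      · subst hac; subst hbd; exact absurd hcd h
      · simp [hbd]
    · simp [hac]

lemma ext_apply (x : {p : Fin n × Fin n // p.1 < p.2} → ℝ) (a b : Fin n) :
    ext x a b = if h : a < b then x ⟨(a,b), h⟩
      else if h : b < a then - x ⟨(b,a), h⟩ else 0 := by
  unfold ext
  have hsplit : ∀ q : {p : Fin n × Fin n // p.1 < p.2}, x q *
      ((if a = q.1.1 then (1:ℝ) else 0) * (if b = q.1.2 then 1 else 0)
      - (if a = q.1.2 then (1:ℝ) else 0) * (if b = q.1.1 then 1 else 0))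
      = x q * ((if a = q.1.1 then (1:ℝ) else 0) * (if b = q.1.2 then 1 else 0))
      - x q * ((if b = q.1.1 then (1:ℝ) else 0) * (if a = q.1.2 then 1 else 0)) := by
    intro q; ring
  rw [Finset.sum_congr rfl (fun q _ => hsplit q), Finset.sum_sub_distrib, delta1, delta1]
  rcases lt_trichotomy a b with h | h | h
  · simp [h, asymm h]
  · simp [h, lt_irrefl]
  · simp [h, asymm h]

lemma ext_skew (x : {p : Fin n × Fin n // p.1 < p.2} → ℝ) (a b : Fin n) :
    ext x b a = - ext x a b := by
  rw [ext_apply, ext_apply]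
  rcases lt_trichotomy a b with h | h | h
  · simp [h, asymm h]
  · subst h; simp [lt_irrefl]
  · simp [h, asymm h]

lemma ext_transpose (x : {p : Fin n × Fin n // p.1 < p.2} → ℝ) :
    (ext x)ᵀ = - ext x := by
  ext a b
  rw [Matrix.transpose_apply, Matrix.neg_apply]
  exact ext_skew x a b

lemma restrict_ext (x : {p : Fin n × Fin n // p.1 < p.2} → ℝ) :
    restrict (ext x) = x := by
  funext p
  rw [restrict, ext_apply, dif_pos p.2]

lemma ext_restrict (M : Matrix (Fin n) (Fin n) ℝ) (h : Mᵀ = -M) :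
    ext (restrict M) = M := by
  have h' : ∀ a b, M b a = - M a b := by
    intro a b
    have := congrFun (congrFun h a) b
    simpa [Matrix.transpose_apply, Matrix.neg_apply] using this
  ext a b
  rw [ext_apply]
  rcases lt_trichotomy a b with hab | hab | hab
  · rw [dif_pos hab]; rfl
  · subst hab
    rw [dif_neg (lt_irrefl a), dif_neg (lt_irrefl a)]
    have := h' a a; linarith
  · rw [dif_neg (asymm hab), dif_pos hab]
    have := h' a b
    simp [restrict, this]

lemma ext_zero : ext (0 : {p : Fin n × Fin n // p.1 < p.2} → ℝ) = 0 := by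
  ext a b
  simp [ext]

set_option maxHeartbeats 1000000 in
lemma collapse (P : Matrix (Fin n) (Fin n) ℝ)
    (p q : {p : Fin n × Fin n // p.1 < p.2}) (xp xq : ℝ) :
    (∑ b : Fin n, ∑ c : Fin n, ∑ a : Fin n,
      (xp * ((if a = p.1.1 then (1:ℝ) else 0) * (if b = p.1.2 then 1 else 0)
      - (if a = p.1.2 then (1:ℝ) else 0) * (if b = p.1.1 then 1 else 0)))
      * P a c *
      (xq * ((if c = q.1.1 then (1:ℝ) else 0) * (if b = q.1.2 then 1 else 0)
      - (if c = q.1.2 then (1:ℝ) else 0) * (if b = q.1.1 then 1 else 0))))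
    = xp * ((P p.1.1 q.1.1 * (if p.1.2 = q.1.2 then 1 else 0)
        + P p.1.2 q.1.2 * (if p.1.1 = q.1.1 then 1 else 0)
        - P p.1.1 q.1.2 * (if p.1.2 = q.1.1 then 1 else 0)
        - P p.1.2 q.1.1 * (if p.1.1 = q.1.2 then 1 else 0)) * xq) := by
  obtain ⟨⟨p1, p2⟩, hp⟩ := p
  obtain ⟨⟨q1, q2⟩, hq⟩ := q
  simp only [sub_mul, mul_sub, ite_mul, mul_ite, one_mul, mul_one, zero_mul, mul_zero]
  simp only [Finset.sum_sub_distrib, Finset.sum_neg_distrib, Finset.sum_const_zero,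
    Finset.sum_ite_eq', Finset.mem_univ, if_true, mul_zero, zero_mul, mul_ite, ite_mul,
    one_mul, mul_one, Finset.sum_ite_irrel]
  try simp only [@eq_comm (Fin n) q1, @eq_comm (Fin n) q2]
  split_ifs <;> first | omega | ring

lemma rot3 {α β γ : Type*} [Fintype α] [Fintype β] [Fintype γ] (f : α → β → γ → ℝ) :
    ∑ x : α, ∑ y : β, ∑ z : γ, f x y z = ∑ y : β, ∑ z : γ, ∑ x : α, f x y z := by
  rw [Finset.sum_comm]
  exact Finset.sum_congr rfl fun y _ => Finset.sum_comm

lemma rot4 {α β γ δ : Type*} [Fintype α] [Fintype β] [Fintype γ] [Fintype δ]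
    (f : α → β → γ → δ → ℝ) :
    ∑ x : α, ∑ y : β, ∑ z : γ, ∑ w : δ, f x y z w
      = ∑ y : β, ∑ z : γ, ∑ w : δ, ∑ x : α, f x y z w := by
  rw [Finset.sum_comm]
  exact Finset.sum_congr rfl fun y _ => rot3 (fun x z w => f x y z w)

lemma quad (P : Matrix (Fin n) (Fin n) ℝ)
    (P2 : Matrix {p : Fin n × Fin n // p.1 < p.2} {p : Fin n × Fin n // p.1 < p.2} ℝ)
    (hP2 : ∀ ab cd : {p : Fin n × Fin n // p.1 < p.2},
      P2 ab cd = P ab.1.1 cd.1.1 * (if ab.1.2 = cd.1.2 then 1 else 0)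
        + P ab.1.2 cd.1.2 * (if ab.1.1 = cd.1.1 then 1 else 0)
        - P ab.1.1 cd.1.2 * (if ab.1.2 = cd.1.1 then 1 else 0)
        - P ab.1.2 cd.1.1 * (if ab.1.1 = cd.1.2 then 1 else 0))
    (x : {p : Fin n × Fin n // p.1 < p.2} → ℝ) :
    dotProduct x (P2 *ᵥ x)
      = ∑ b : Fin n, ∑ c : Fin n, ∑ a : Fin n, ext x a b * P a c * ext x c b := by
  have expand : ∀ b c a : Fin n, ext x a b * P a c * ext x c b
      = ∑ p : {p : Fin n × Fin n // p.1 < p.2}, ∑ q : {p : Fin n × Fin n // p.1 < p.2},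
        (x p * ((if a = p.1.1 then (1:ℝ) else 0) * (if b = p.1.2 then 1 else 0)
          - (if a = p.1.2 then (1:ℝ) else 0) * (if b = p.1.1 then 1 else 0)))
        * P a c *
        (x q * ((if c = q.1.1 then (1:ℝ) else 0) * (if b = q.1.2 then 1 else 0)
          - (if c = q.1.2 then (1:ℝ) else 0) * (if b = q.1.1 then 1 else 0))) := by
    intro b c a
    simp only [ext]
    rw [Finset.sum_mul, Finset.sum_mul]
    refine Finset.sum_congr rfl fun p _ => ?_
    rw [Finset.mul_sum]
  calc dotProduct x (P2 *ᵥ x)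
      = ∑ p, ∑ q, x p * (P2 p q * x q) := by
        simp [dotProduct, mulVec, Finset.mul_sum]
    _ = ∑ p : {p : Fin n × Fin n // p.1 < p.2}, ∑ q : {p : Fin n × Fin n // p.1 < p.2},
        ∑ b : Fin n, ∑ c : Fin n, ∑ a : Fin n,
        (x p * ((if a = p.1.1 then (1:ℝ) else 0) * (if b = p.1.2 then 1 else 0)
          - (if a = p.1.2 then (1:ℝ) else 0) * (if b = p.1.1 then 1 else 0)))
        * P a c *
        (x q * ((if c = q.1.1 then (1:ℝ) else 0) * (if b = q.1.2 then 1 else 0)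
          - (if c = q.1.2 then (1:ℝ) else 0) * (if b = q.1.1 then 1 else 0))) := by
        refine Finset.sum_congr rfl fun p _ => Finset.sum_congr rfl fun q _ => ?_
        rw [hP2 p q]
        exact (collapse P p q (x p) (x q)).symm
    _ = ∑ q : {p : Fin n × Fin n // p.1 < p.2}, ∑ b : Fin n, ∑ c : Fin n,
          ∑ p : {p : Fin n × Fin n // p.1 < p.2}, ∑ a : Fin n, _ := rot4 _
    _ = ∑ b : Fin n, ∑ c : Fin n, ∑ p : {p : Fin n × Fin n // p.1 < p.2},
          ∑ q : {p : Fin n × Fin n // p.1 < p.2}, ∑ a : Fin n, _ := rot4 _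
    _ = ∑ b : Fin n, ∑ c : Fin n, ∑ a : Fin n, ext x a b * P a c * ext x c b := by
        refine Finset.sum_congr rfl fun b _ => Finset.sum_congr rfl fun c _ => ?_
        rw [(rot3 _).trans (rot3 _)]
        exact Finset.sum_congr rfl fun a _ => (expand b c a).symm

lemma Qform (P X : Matrix (Fin n) (Fin n) ℝ) :
    (∑ b : Fin n, ∑ c : Fin n, ∑ a : Fin n, X a b * P a c * X c b)
      = (Xᵀ * P * X).trace := by
  simp only [Matrix.trace, Matrix.diag, Matrix.mul_apply, Matrix.transpose_apply,
    Finset.sum_mul]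

lemma sum_pairs (μ : Fin n → ℝ) (y : {p : Fin n × Fin n // p.1 < p.2} → ℝ) :
    (∑ b : Fin n, ∑ c : Fin n, μ c * (ext y c b)^2)
      = ∑ p : {p : Fin n × Fin n // p.1 < p.2}, (μ p.1.1 + μ p.1.2) * (y p)^2 := by
  have h1 : (∑ b : Fin n, ∑ c : Fin n, μ c * (ext y c b)^2)
      = ∑ z : Fin n × Fin n, μ z.1 * (ext y z.1 z.2)^2 := by
    rw [Finset.sum_comm, Fintype.sum_prod_type]
  rw [h1]
  have h2 : (∑ z : Fin n × Fin n, μ z.1 * (ext y z.1 z.2)^2)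
      = (∑ z ∈ univ.filter (fun z : Fin n × Fin n => z.1 < z.2), μ z.1 * (ext y z.1 z.2)^2)
      + ∑ z ∈ univ.filter (fun z : Fin n × Fin n => ¬ z.1 < z.2), μ z.1 * (ext y z.1 z.2)^2 :=
    (Finset.sum_filter_add_sum_filter_not _ _ _).symm
  have h3 : (∑ z ∈ univ.filter (fun z : Fin n × Fin n => ¬ z.1 < z.2),
        μ z.1 * (ext y z.1 z.2)^2)
      = ∑ z ∈ univ.filter (fun z : Fin n × Fin n => z.2 < z.1), μ z.1 * (ext y z.1 z.2)^2 := by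
    symm
    apply Finset.sum_subset
    · intro z hz
      simp only [Finset.mem_filter, Finset.mem_univ, true_and] at *
      exact asymm hz
    · intro z hz hz'
      simp only [Finset.mem_filter, Finset.mem_univ, true_and] at hz hz'
      have hzz : z.1 = z.2 := le_antisymm (not_lt.mp hz') (not_lt.mp hz)
      rw [hzz, ext_apply]
      simp [lt_irrefl]
  have h4 : (∑ z ∈ univ.filter (fun z : Fin n × Fin n => z.2 < z.1),
        μ z.1 * (ext y z.1 z.2)^2)
      = ∑ z ∈ univ.filter (fun z : Fin n × Fin n => z.1 < z.2), μ z.2 * (ext y z.2 z.1)^2 := by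
    apply Finset.sum_nbij' (fun z : Fin n × Fin n => (z.2, z.1))
      (fun z : Fin n × Fin n => (z.2, z.1))
    · intro z hz; simp only [Finset.mem_filter, Finset.mem_univ, true_and] at *; exact hz
    · intro z hz; simp only [Finset.mem_filter, Finset.mem_univ, true_and] at *; exact hz
    · intro z _; rfl
    · intro z _; rfl
    · intro z _; rfl
  rw [h2, h3, h4, ← Finset.sum_add_distrib]
  have h5 : ∀ z : Fin n × Fin n,
      μ z.1 * (ext y z.1 z.2)^2 + μ z.2 * (ext y z.2 z.1)^2
      = (μ z.1 + μ z.2) * (ext y z.1 z.2)^2 := by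
    intro z
    rw [ext_skew y z.1 z.2]
    ring
  rw [Finset.sum_congr rfl fun z _ => h5 z]
  rw [Finset.sum_subtype (p := fun z : Fin n × Fin n => z.1 < z.2)
    (univ.filter (fun z : Fin n × Fin n => z.1 < z.2))
    (by simp) (fun z : Fin n × Fin n => (μ z.1 + μ z.2) * (ext y z.1 z.2)^2)]
  refine Finset.sum_congr rfl fun p _ => ?_
  rw [ext_apply, dif_pos p.2]

lemma central (P : Matrix (Fin n) (Fin n) ℝ)
    (P2 : Matrix {p : Fin n × Fin n // p.1 < p.2} {p : Fin n × Fin n // p.1 < p.2} ℝ)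
    (hP2 : ∀ ab cd : {p : Fin n × Fin n // p.1 < p.2},
      P2 ab cd = P ab.1.1 cd.1.1 * (if ab.1.2 = cd.1.2 then 1 else 0)
        + P ab.1.2 cd.1.2 * (if ab.1.1 = cd.1.1 then 1 else 0)
        - P ab.1.1 cd.1.2 * (if ab.1.2 = cd.1.1 then 1 else 0)
        - P ab.1.2 cd.1.1 * (if ab.1.1 = cd.1.2 then 1 else 0))
    (U : Matrix (Fin n) (Fin n) ℝ) (hU1 : Uᵀ * U = 1) (hU2 : U * Uᵀ = 1)
    (μ : Fin n → ℝ) (hd : Uᵀ * P * U = Matrix.diagonal μ)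
    (y : {p : Fin n × Fin n // p.1 < p.2} → ℝ) :
    dotProduct (restrict (U * ext y * Uᵀ)) (P2 *ᵥ restrict (U * ext y * Uᵀ))
      = ∑ p : {p : Fin n × Fin n // p.1 < p.2}, (μ p.1.1 + μ p.1.2) * (y p)^2 := by
  have hanti : (U * ext y * Uᵀ)ᵀ = -(U * ext y * Uᵀ) := by
    simp [Matrix.transpose_mul, ext_transpose, Matrix.mul_assoc]
  rw [quad P P2 hP2, ext_restrict _ hanti, Qform]
  have h2 : (U * ext y * Uᵀ)ᵀ * P * (U * ext y * Uᵀ)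
      = U * ((ext y)ᵀ * Matrix.diagonal μ * ext y) * Uᵀ := by
    rw [← hd]
    simp only [Matrix.transpose_mul, Matrix.transpose_transpose, Matrix.mul_assoc]
  rw [h2]
  have h3 : ∀ Z : Matrix (Fin n) (Fin n) ℝ, (U * Z * Uᵀ).trace = Z.trace := by
    intro Z
    rw [Matrix.trace_mul_cycle, hU1, Matrix.one_mul]
  rw [h3]
  have h4 : ((ext y)ᵀ * Matrix.diagonal μ * ext y).trace
      = ∑ b : Fin n, ∑ c : Fin n, μ c * (ext y c b)^2 := by
    simp only [Matrix.trace, Matrix.diag, Matrix.mul_apply, Matrix.mul_diagonal,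
      Matrix.transpose_apply, Finset.sum_mul]
    refine Finset.sum_congr rfl fun b _ => Finset.sum_congr rfl fun c _ => ?_
    simp only [Matrix.diagonal_apply, ite_mul, mul_ite, zero_mul, mul_zero,
      Finset.sum_ite_eq', Finset.mem_univ, if_true]
    ring
  rw [h4, sum_pairs]

end TwoPosAux


open TwoPosAux in
/-- `P^[2]` (expressed as the matrix `S^[2]` of (5.2) on pairs `a < b`) is positive definite
iff the sum of any two eigenvalues of `P` is positive. -/
theorem two_positive_iff_posdef (n : ℕ) (hn : 2 ≤ n)
    (P : Matrix (Fin n) (Fin n) ℝ) (hP : P.IsHermitian)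
    (P2 : Matrix {p : Fin n × Fin n // p.1 < p.2} {p : Fin n × Fin n // p.1 < p.2} ℝ)
    (hP2 : ∀ ab cd : {p : Fin n × Fin n // p.1 < p.2},
      P2 ab cd = P ab.1.1 cd.1.1 * (if ab.1.2 = cd.1.2 then 1 else 0)
        + P ab.1.2 cd.1.2 * (if ab.1.1 = cd.1.1 then 1 else 0)
        - P ab.1.1 cd.1.2 * (if ab.1.2 = cd.1.1 then 1 else 0)
        - P ab.1.2 cd.1.1 * (if ab.1.1 = cd.1.2 then 1 else 0)) :
    P2.PosDef ↔ ∀ i j : Fin n, i ≠ j → 0 < hP.eigenvalues i + hP.eigenvalues j := by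
  classical
  set μ : Fin n → ℝ := hP.eigenvalues with hμ
  set U : Matrix (Fin n) (Fin n) ℝ := (hP.eigenvectorUnitary : Matrix (Fin n) (Fin n) ℝ) with hUdef
  have hstar : ∀ M : Matrix (Fin n) (Fin n) ℝ, star M = Mᵀ := by
    intro M
    ext i j
    simp [Matrix.star_eq_conjTranspose, Matrix.conjTranspose_apply]
  have hU1 : Uᵀ * U = 1 := by
    have h := Matrix.mem_unitaryGroup_iff'.mp hP.eigenvectorUnitary.2
    rwa [hstar] at h
  have hU2 : U * Uᵀ = 1 := by
    have h := Matrix.mem_unitaryGroup_iff.mp hP.eigenvectorUnitary.2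
    rwa [hstar] at h
  have hd : Uᵀ * P * U = Matrix.diagonal μ := by
    have h := hP.conjStarAlgAut_star_eigenvectorUnitary
    rw [Unitary.conjStarAlgAut_star_apply] at h
    rw [hstar] at h
    simpa using h
  have hstarv : ∀ x : {p : Fin n × Fin n // p.1 < p.2} → ℝ, star x = x := by
    intro x; funext p; simp
  have hPhi0 : ∀ M : Matrix (Fin n) (Fin n) ℝ,
      restrict (M * ext (0 : {p : Fin n × Fin n // p.1 < p.2} → ℝ) * Mᵀ) = 0 := by
    intro M
    rw [ext_zero, Matrix.mul_zero, Matrix.zero_mul]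
    funext p
    simp [TwoPosAux.restrict]
  have hPsiPhi : ∀ y : {p : Fin n × Fin n // p.1 < p.2} → ℝ,
      restrict (Uᵀ * ext (restrict (U * ext y * Uᵀ)) * U) = y := by
    intro y
    have hanti : (U * ext y * Uᵀ)ᵀ = -(U * ext y * Uᵀ) := by
      simp [Matrix.transpose_mul, ext_transpose, Matrix.mul_assoc]
    rw [ext_restrict _ hanti]
    have h : Uᵀ * (U * ext y * Uᵀ) * U = ext y := by
      simp only [← Matrix.mul_assoc]
      rw [hU1, Matrix.one_mul, Matrix.mul_assoc, hU1, Matrix.mul_one]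
    rw [h, restrict_ext]
  have hPhiPsi : ∀ x : {p : Fin n × Fin n // p.1 < p.2} → ℝ,
      restrict (U * ext (restrict (Uᵀ * ext x * U)) * Uᵀ) = x := by
    intro x
    have hanti : (Uᵀ * ext x * U)ᵀ = -(Uᵀ * ext x * U) := by
      simp [Matrix.transpose_mul, ext_transpose, Matrix.mul_assoc]
    rw [ext_restrict _ hanti]
    have h : U * (Uᵀ * ext x * U) * Uᵀ = ext x := by
      simp only [← Matrix.mul_assoc]
      rw [hU2, Matrix.one_mul, Matrix.mul_assoc, hU2, Matrix.mul_one]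
    rw [h, restrict_ext]
  constructor
  · intro hpd
    have main : ∀ i j : Fin n, i < j → 0 < μ i + μ j := by
      intro i j hij
      set p0 : {p : Fin n × Fin n // p.1 < p.2} := ⟨(i, j), hij⟩ with hp0def
      set y : {p : Fin n × Fin n // p.1 < p.2} → ℝ :=
        fun q => if q = p0 then 1 else 0 with hy
      set x := restrict (U * ext y * Uᵀ) with hx
      have hxne : x ≠ 0 := by
        intro h0
        have h1 := hPsiPhi y
        rw [← hx, h0] at h1
        have h2 : restrict (Uᵀ * ext (0 : {p : Fin n × Fin n // p.1 < p.2} → ℝ) * U) = 0 := by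
          rw [ext_zero, Matrix.mul_zero, Matrix.zero_mul]
          funext p
          simp [TwoPosAux.restrict]
        rw [h2] at h1
        have h3 := congrFun h1 p0
        simp [hy] at h3
      have hq := hpd.dotProduct_mulVec_pos hxne
      rw [hstarv x, hx, central P P2 hP2 U hU1 hU2 μ hd y] at hq
      rw [Finset.sum_eq_single p0] at hq
      · simpa [hy] using hq
      · intro q _ hqne
        simp [hy, hqne]
      · intro h; exact absurd (Finset.mem_univ p0) h
    intro i j hij
    rcases lt_or_gt_of_ne hij with h | h
    · exact main i j h
    · have := main j i h; linarith
  · intro hev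
    have hsymP : ∀ a b : Fin n, P a b = P b a := by
      intro a b
      have h := congrFun (congrFun hP a) b
      rw [Matrix.conjTranspose_apply] at h
      simpa using h.symm
    have dflip : ∀ u v : Fin n, (if u = v then (1:ℝ) else 0) = if v = u then 1 else 0 := by
      intro u v
      by_cases h : u = v
      · subst h; simp
      · rw [if_neg h, if_neg (fun e => h e.symm)]
    refine posDef_iff_dotProduct_mulVec.mpr ⟨?_, ?_⟩
    · ext ab cd
      rw [Matrix.conjTranspose_apply, star_trivial, hP2 cd ab, hP2 ab cd]
      rw [dflip cd.1.2 ab.1.2, dflip cd.1.1 ab.1.1, dflip cd.1.2 ab.1.1, dflip cd.1.1 ab.1.2,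
          hsymP cd.1.1 ab.1.1, hsymP cd.1.2 ab.1.2, hsymP cd.1.1 ab.1.2, hsymP cd.1.2 ab.1.1]
      ring
    · intro x hx
      set y := restrict (Uᵀ * ext x * U) with hy
      have hPhiy : restrict (U * ext y * Uᵀ) = x := hPhiPsi x
      have hyne : y ≠ 0 := by
        intro h0
        apply hx
        rw [← hPhiy, h0, hPhi0 U]
      rw [hstarv x, ← hPhiy, central P P2 hP2 U hU1 hU2 μ hd y]
      obtain ⟨q0, hq0⟩ : ∃ q, y q ≠ 0 := by
        by_contra hc
        push_neg at hc
        exact hyne (funext hc)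
      apply Finset.sum_pos'
      · intro q _
        have h := hev q.1.1 q.1.2 (ne_of_lt q.2)
        have h2 : (0:ℝ) ≤ (y q)^2 := sq_nonneg _
        nlinarith
      · refine ⟨q0, Finset.mem_univ _, ?_⟩
        have h := hev q0.1.1 q0.1.2 (ne_of_lt q0.2)
        have h2 : 0 < (y q0)^2 :=
          lt_of_le_of_ne (sq_nonneg _) (Ne.symm (pow_ne_zero 2 hq0))
        exact mul_pos h h2
end

section
/- Let f : V → W be a linear map between finite-dimensional inner product spaces with singular values λ₁, …, λₙ (n = dim V, n ≥ 2). Define S on V ⊕ W restricted to the graph of f by S(X,Y) = ⟨π₁X, π₁Y⟩ - ⟨π₂X, π₂Y⟩. Then, with respect to the orthonormal basis eᵢ = (aᵢ + λᵢ a_{n+i})/√(1+λᵢ²) of the graph coming from the singular value decomposition, S(eᵢ, eⱼ) = δᵢⱼ(1-λᵢ²)/(1+λᵢ²). In particular, S restricted to the graph is positive definite iff all λᵢ < 1, and S^[2] is positive definite iff λᵢλⱼ < 1 for all i ≠ j. -/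
open RealInnerProductSpace in
/-- The tensor `S(X,Y) = ⟨π₁X,π₁Y⟩ - ⟨π₂X,π₂Y⟩` is diagonal on the graph of `f` in the
singular value bases, with eigenvalues `(1-λᵢ²)/(1+λᵢ²)`; positivity characterizations. -/
theorem tensor_S_on_graph
    {V W : Type*} [NormedAddCommGroup V] [InnerProductSpace ℝ V]
    [NormedAddCommGroup W] [InnerProductSpace ℝ W]
    (n : ℕ) (hn : 2 ≤ n) (f : V →ₗ[ℝ] W)
    (l : Fin n → ℝ) (hl : ∀ i, 0 ≤ l i)
    (a : Fin n → V) (ha : Orthonormal ℝ a)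
    (b : Fin n → W) (hb : Orthonormal ℝ b)
    (hf : ∀ i, f (a i) = l i • b i)
    (S : V × W → V × W → ℝ)
    (hS : ∀ X Y : V × W, S X Y = ⟪X.1, Y.1⟫ - ⟪X.2, Y.2⟫)
    (e : Fin n → V × W)
    (he : ∀ i, e i = (Real.sqrt (1 + l i ^ 2))⁻¹ • (a i, l i • b i)) :
    (∀ i j, S (e i) (e j) = if i = j then (1 - l i ^ 2) / (1 + l i ^ 2) else 0) ∧
    ((∀ c : Fin n → ℝ, c ≠ 0 → 0 < S (∑ i, c i • e i) (∑ i, c i • e i)) ↔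
      ∀ i, l i < 1) ∧
    ((∀ i j, i ≠ j → 0 < S (e i) (e i) + S (e j) (e j)) ↔
      ∀ i j, i ≠ j → l i * l j < 1) := by
  have hpos : ∀ i, (0:ℝ) < 1 + l i ^ 2 := fun i => by positivity
  have hsq : ∀ i, Real.sqrt (1 + l i ^ 2) * Real.sqrt (1 + l i ^ 2) = 1 + l i ^ 2 :=
    fun i => Real.mul_self_sqrt (hpos i).le
  have hsne : ∀ i, Real.sqrt (1 + l i ^ 2) ≠ 0 :=
    fun i => Real.sqrt_ne_zero'.mpr (hpos i)
  have h1 : ∀ i j, S (e i) (e j) = if i = j then (1 - l i ^ 2) / (1 + l i ^ 2) else 0 := by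
    intro i j
    rw [hS, he i, he j]
    simp only [Prod.smul_fst, Prod.smul_snd]
    rw [real_inner_smul_left, real_inner_smul_right, real_inner_smul_left,
      real_inner_smul_right, real_inner_smul_left, real_inner_smul_right]
    rw [orthonormal_iff_ite.mp ha, orthonormal_iff_ite.mp hb]
    by_cases h : i = j
    · subst h
      simp only [if_pos rfl]
      field_simp
      simp only [if_true, Real.sq_sqrt (hpos i).le]
      linear_combination (l i ^ 2 - 1) * mul_inv_cancel₀ (hpos i).ne'
    · simp [h]
  refine ⟨h1, ?_, ?_⟩
  · have hbil : ∀ c : Fin n → ℝ,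
        S (∑ i, c i • e i) (∑ i, c i • e i)
          = ∑ i, c i ^ 2 * ((1 - l i ^ 2) / (1 + l i ^ 2)) := by
      intro c
      rw [hS]
      simp only [Prod.fst_sum, Prod.snd_sum, Prod.smul_fst, Prod.smul_snd]
      rw [sum_inner, sum_inner, ← Finset.sum_sub_distrib]
      refine Finset.sum_congr rfl fun i _ => ?_
      rw [inner_sum, inner_sum, ← Finset.sum_sub_distrib]
      have : ∀ j, (⟪c i • (e i).1, c j • (e j).1⟫ - ⟪c i • (e i).2, c j • (e j).2⟫)
          = c i * c j * S (e i) (e j) := by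
        intro j
        rw [hS]
        simp only [real_inner_smul_left, real_inner_smul_right]
        ring
      simp only [this, h1, mul_ite, mul_zero]
      rw [Finset.sum_ite_eq Finset.univ i (fun j => c i * c j * ((1 - l i ^ 2) / (1 + l i ^ 2)))]
      simp only [Finset.mem_univ, if_true]
      ring
    constructor
    · intro h i
      have hc : (Pi.single i 1 : Fin n → ℝ) ≠ 0 := by
        intro h0
        have := congrFun h0 i
        simp at this
      have := h _ hc
      rw [hbil] at this
      rw [Finset.sum_eq_single i (fun j _ hj => by simp [Pi.single_eq_of_ne hj])
        (by simp)] at this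
      simp at this
      have h2 : l i ^ 2 < 1 := by
        by_contra h2
        push_neg at h2
        have : (1 - l i ^ 2) / (1 + l i ^ 2) ≤ 0 :=
          div_nonpos_of_nonpos_of_nonneg (by linarith) (hpos i).le
        linarith
      nlinarith [hl i]
    · intro h c hc
      rw [hbil]
      obtain ⟨i, hi⟩ := Function.ne_iff.mp hc
      refine Finset.sum_pos' (fun j _ => ?_) ⟨i, Finset.mem_univ i, ?_⟩
      · have : (0:ℝ) ≤ (1 - l j ^ 2) / (1 + l j ^ 2) := by
          apply div_nonneg _ (hpos j).le
          nlinarith [h j, hl j]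
        positivity
      · have h2 : (0:ℝ) < (1 - l i ^ 2) / (1 + l i ^ 2) := by
          apply div_pos _ (hpos i)
          nlinarith [h i, hl i]
        have h3 : (0:ℝ) < c i ^ 2 := by
          rw [sq]
          rcases hi.lt_or_gt with h | h
          exacts [mul_pos_of_neg_of_neg h h, mul_pos h h]
        exact mul_pos h3 h2
  · have key : ∀ i j, S (e i) (e i) + S (e j) (e j)
        = ((1 - l i ^ 2) / (1 + l i ^ 2)) + ((1 - l j ^ 2) / (1 + l j ^ 2)) := by
      intro i j; rw [h1, h1]; simp
    constructor
    · intro h i j hij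
      have := h i j hij
      rw [key i j, div_add_div _ _ (hpos i).ne' (hpos j).ne', div_pos_iff] at this
      rcases this with ⟨h2, _⟩ | ⟨_, h3⟩
      · nlinarith [mul_nonneg (hl i) (hl j)]
      · nlinarith [mul_pos (hpos i) (hpos j)]
    · intro h i j hij
      have := h i j hij
      rw [key i j, div_add_div _ _ (hpos i).ne' (hpos j).ne']
      apply div_pos _ (mul_pos (hpos i) (hpos j))
      nlinarith [mul_nonneg (hl i) (hl j)]
end

section
/- If nonnegative reals λ₁, …, λₙ satisfy λᵢ² ≤ (1-ε)/ε for all i and λᵢλⱼ ≤ √(1-ε) for all i ≠ j (with 0 < ε < 1, n ≥ 2, and k₁ + k₂ > 0), then there exists c₁ > 0 depending only on ε, k₁, k₂, n such that (k₁+k₂)·Σ_{i<j} (λᵢ²+λⱼ²-2λᵢ²λⱼ²)/(2(1+λᵢ²)(1+λⱼ²)) ≥ c₁·Σᵢ λᵢ². -/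
open Finset

lemma pair_sum (n : ℕ) (a : Fin n → ℝ) :
    ∑ i, ∑ j ∈ univ.filter (fun j => i < j), (a i + a j)
      = ((n : ℝ) - 1) * ∑ i, a i := by
  have h1 : ∀ i : Fin n, ∑ j ∈ univ.filter (fun j => i < j), (a i + a j)
      = ((univ.filter (fun j => i < j)).card : ℝ) * a i
        + ∑ j ∈ univ.filter (fun j => i < j), a j := by
    intro i
    rw [sum_add_distrib, sum_const, nsmul_eq_mul]
  have h2 : ∑ i : Fin n, ∑ j ∈ univ.filter (fun j => i < j), a j
      = ∑ j : Fin n, ∑ i ∈ univ.filter (fun i => i < j), a j := by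
    apply sum_comm'
    intro i j
    simp
  have h3 : ∀ j : Fin n, ∑ i ∈ univ.filter (fun i => i < j), a j
      = ((univ.filter (fun i => i < j)).card : ℝ) * a j := by
    intro j; rw [sum_const, nsmul_eq_mul]
  calc ∑ i, ∑ j ∈ univ.filter (fun j => i < j), (a i + a j)
      = ∑ i : Fin n, (((univ.filter (fun j => i < j)).card : ℝ) * a i)
        + ∑ i : Fin n, ∑ j ∈ univ.filter (fun j => i < j), a j := by
        simp_rw [h1]; rw [sum_add_distrib]
    _ = ∑ k : Fin n, (((univ.filter (fun j => k < j)).card : ℝ)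
          + ((univ.filter (fun i => i < k)).card : ℝ)) * a k := by
        rw [h2]; simp_rw [h3, add_mul, sum_add_distrib]
    _ = ((n : ℝ) - 1) * ∑ i, a i := by
        rw [mul_sum]
        apply sum_congr rfl
        intro k _
        have hc : (univ.filter (fun j => k < j)).card + (univ.filter (fun i => i < k)).card = n - 1 := by
          rw [filter_lt_eq_Ioi, filter_gt_eq_Iio, Fin.card_Ioi, Fin.card_Iio]; omega
        have hn : 1 ≤ n := Nat.one_le_iff_ne_zero.mpr (by rintro rfl; exact k.elim0)
        have : ((univ.filter (fun j => k < j)).card : ℝ) + ((univ.filter (fun i => i < k)).card : ℝ)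
            = (n : ℝ) - 1 := by
          rw [← Nat.cast_add, hc, Nat.cast_sub hn]; simp
        rw [this]

lemma term_bound (ε : ℝ) (hε : 0 < ε) (hε1 : ε < 1) (x y : ℝ) (hx : 0 ≤ x) (hy : 0 ≤ y)
    (hx2 : x ^ 2 ≤ (1 - ε) / ε) (hy2 : y ^ 2 ≤ (1 - ε) / ε)
    (hxy : x * y ≤ Real.sqrt (1 - ε)) :
    (1 - Real.sqrt (1 - ε)) * ε ^ 2 / 2 * (x ^ 2 + y ^ 2) ≤
      (x ^ 2 + y ^ 2 - 2 * x ^ 2 * y ^ 2) / (2 * (1 + x ^ 2) * (1 + y ^ 2)) := by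
  set s := Real.sqrt (1 - ε) with hs
  have hs0 : 0 ≤ s := Real.sqrt_nonneg _
  have hs1 : s < 1 := (Real.sqrt_lt' one_pos).mpr (by nlinarith)
  have hxy0 : 0 ≤ x * y := mul_nonneg hx hy
  have h2xy : 2 * (x * y) ≤ x ^ 2 + y ^ 2 := by nlinarith [sq_nonneg (x - y)]
  have hN : (1 - s) * (x ^ 2 + y ^ 2) ≤ x ^ 2 + y ^ 2 - 2 * x ^ 2 * y ^ 2 := by
    have := mul_le_mul hxy h2xy (by linarith) hs0
    nlinarith
  have hsum0 : 0 ≤ x ^ 2 + y ^ 2 := by positivity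
  have hN0 : 0 ≤ x ^ 2 + y ^ 2 - 2 * x ^ 2 * y ^ 2 := le_trans (by nlinarith) hN
  have hx2' : x ^ 2 * ε ≤ 1 - ε := by
    rw [← le_div_iff₀ hε]; exact hx2
  have hy2' : y ^ 2 * ε ≤ 1 - ε := by
    rw [← le_div_iff₀ hε]; exact hy2
  have hxe : 1 + x ^ 2 ≤ 1 / ε := by
    rw [le_div_iff₀ hε]; nlinarith
  have hye : 1 + y ^ 2 ≤ 1 / ε := by
    rw [le_div_iff₀ hε]; nlinarith
  have hD : 2 * (1 + x ^ 2) * (1 + y ^ 2) ≤ 2 / ε ^ 2 := by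
    have h1 : (0:ℝ) < 1 + x ^ 2 := by positivity
    have h2 : (0:ℝ) < 1 + y ^ 2 := by positivity
    have := mul_le_mul hxe hye h2.le (by positivity)
    calc 2 * (1 + x ^ 2) * (1 + y ^ 2) = 2 * ((1 + x ^ 2) * (1 + y ^ 2)) := by ring
      _ ≤ 2 * (1 / ε * (1 / ε)) := by linarith
      _ = 2 / ε ^ 2 := by field_simp
  have hDpos : (0:ℝ) < 2 * (1 + x ^ 2) * (1 + y ^ 2) := by positivity
  have step : (x ^ 2 + y ^ 2 - 2 * x ^ 2 * y ^ 2) / (2 / ε ^ 2)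
      ≤ (x ^ 2 + y ^ 2 - 2 * x ^ 2 * y ^ 2) / (2 * (1 + x ^ 2) * (1 + y ^ 2)) := by
    gcongr
  refine le_trans ?_ step
  have heq : (x ^ 2 + y ^ 2 - 2 * x ^ 2 * y ^ 2) / (2 / ε ^ 2)
      = (x ^ 2 + y ^ 2 - 2 * x ^ 2 * y ^ 2) * ε ^ 2 / 2 := by
    field_simp
  rw [heq]
  nlinarith [mul_le_mul_of_nonneg_right hN (show (0:ℝ) ≤ ε ^ 2 / 2 by positivity)]

open Finset in
/-- Inequality (6.4): the curvature term dominates a multiple of `∑ λᵢ²`. -/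
theorem curvature_term_lower_bound (n : ℕ) (hn : 2 ≤ n) (ε k₁ k₂ : ℝ)
    (hε : 0 < ε) (hε1 : ε < 1) (hk : 0 < k₁ + k₂) :
    ∃ c₁ > 0, ∀ l : Fin n → ℝ, (∀ i, 0 ≤ l i) →
      (∀ i, l i ^ 2 ≤ (1 - ε) / ε) →
      (∀ i j, i ≠ j → l i * l j ≤ Real.sqrt (1 - ε)) →
      c₁ * ∑ i, l i ^ 2 ≤
        (k₁ + k₂) * ∑ i, ∑ j ∈ univ.filter (fun j => i < j),
          (l i ^ 2 + l j ^ 2 - 2 * l i ^ 2 * l j ^ 2) /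
            (2 * (1 + l i ^ 2) * (1 + l j ^ 2)) := by
  set C := (1 - Real.sqrt (1 - ε)) * ε ^ 2 / 2 with hC
  have hs1 : Real.sqrt (1 - ε) < 1 := (Real.sqrt_lt' one_pos).mpr (by nlinarith)
  have hCpos : 0 < C := by
    have : 0 < 1 - Real.sqrt (1 - ε) := by linarith
    positivity
  have hn1 : (0:ℝ) < (n : ℝ) - 1 := by
    have : (2:ℝ) ≤ (n:ℝ) := by exact_mod_cast hn
    linarith
  refine ⟨(k₁ + k₂) * C * ((n : ℝ) - 1), by positivity, ?_⟩
  intro l hl hl2 hlprod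
  have key : C * (((n:ℝ) - 1) * ∑ i, l i ^ 2) ≤
      ∑ i, ∑ j ∈ univ.filter (fun j => i < j),
        (l i ^ 2 + l j ^ 2 - 2 * l i ^ 2 * l j ^ 2) /
          (2 * (1 + l i ^ 2) * (1 + l j ^ 2)) := by
    rw [← pair_sum n (fun i => l i ^ 2)]
    rw [mul_sum]
    apply sum_le_sum
    intro i _
    rw [mul_sum]
    apply sum_le_sum
    intro j hj
    have hij : i ≠ j := (mem_filter.mp hj).2.ne
    exact term_bound ε hε hε1 (l i) (l j) (hl i) (hl j) (hl2 i) (hl2 j) (hlprod i j hij)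
  calc (k₁ + k₂) * C * ((n : ℝ) - 1) * ∑ i, l i ^ 2
      = (k₁ + k₂) * (C * (((n:ℝ) - 1) * ∑ i, l i ^ 2)) := by ring
    _ ≤ (k₁ + k₂) * ∑ i, ∑ j ∈ univ.filter (fun j => i < j),
          (l i ^ 2 + l j ^ 2 - 2 * l i ^ 2 * l j ^ 2) /
            (2 * (1 + l i ^ 2) * (1 + l j ^ 2)) :=
        mul_le_mul_of_nonneg_left key hk.le
end

section
/- Let S be the symmetric operator with block form (in the decomposition given by singular value bases) having tangent-tangent block diag((1-λᵢ²)/(1+λᵢ²)), mixed block diag(-2λᵢ/(1+λᵢ²)), and normal-normal block diag(-(1-λᵢ²)/(1+λᵢ²)) (and -1 on the complement). If the tangential restriction satisfies Sᵢᵢ ≥ ε for all i, then for any vector V ∈ ℝⁿ and any second-fundamental-form array h, the quantity -2 Σ h_{α,k,i} h_{β,k,j} S_{αβ} Vⁱ Vʲ = Σ_{p,q≤r} 2 h_{n+p,k,i} h_{n+q,k,j} (-S^N)_{pq} VⁱVʲ + Σ_{p>r} 2 (h_{n+p,k,i}Vⁱ)² is nonnegative, where (-S^N)_{pq} = δ_{pq}(1-λ_p²)/(1+λ_p²)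 ≥ ε δ_{pq}. -/
open Finset in
/-- The key null-vector reaction term in Lemma 4.1 is nonnegative: with the normal block
`S_{αβ}` of (4.6), `-2 Σ h_{αki} h_{βkj} S_{αβ} Vⁱ Vʲ ≥ 0` when `(1-λ_p²)/(1+λ_p²) ≥ ε ≥ 0`. -/
theorem null_vector_term_nonneg (n r : ℕ) (l : Fin n → ℝ) (hl : ∀ i, 0 ≤ l i)
    (ε : ℝ) (hε : 0 ≤ ε)
    (hpos : ∀ p : Fin n, (p : ℕ) < r → ε ≤ (1 - l p ^ 2) / (1 + l p ^ 2))
    (Snn : Fin n → Fin n → ℝ)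
    (hSnn : ∀ p q, Snn p q =
      if p = q then -(if (p : ℕ) < r then (1 - l p ^ 2) / (1 + l p ^ 2) else 1) else 0)
    (h : Fin n → Fin n → Fin n → ℝ) (V : Fin n → ℝ) :
    (-2 * ∑ k, ∑ p, ∑ q, ∑ i, ∑ j, h p k i * h q k j * Snn p q * V i * V j
      = (∑ k, ∑ p ∈ univ.filter (fun p : Fin n => (p : ℕ) < r),
          2 * (1 - l p ^ 2) / (1 + l p ^ 2) * (∑ i, h p k i * V i) ^ 2)
        + ∑ k, ∑ p ∈ univ.filter (fun p : Fin n => r ≤ (p : ℕ)),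
            2 * (∑ i, h p k i * V i) ^ 2) ∧
    0 ≤ -2 * ∑ k, ∑ p, ∑ q, ∑ i, ∑ j, h p k i * h q k j * Snn p q * V i * V j := by
  set A : Fin n → Fin n → ℝ := fun p k => ∑ i, h p k i * V i with hA
  have inner : ∀ p q k, (∑ i, ∑ j, h p k i * h q k j * Snn p q * V i * V j)
      = Snn p q * (A p k * A q k) := by
    intro p q k
    rw [hA]
    simp only [Finset.mul_sum, Finset.sum_mul]
    rw [Finset.sum_comm]
    refine Finset.sum_congr rfl fun j _ => Finset.sum_congr rfl fun i _ => ?_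
    ring
  have collapse : ∀ p k, (∑ q, Snn p q * (A p k * A q k)) = Snn p p * (A p k)^2 := by
    intro p k
    rw [Finset.sum_eq_single p]
    · ring
    · intro q _ hq
      rw [hSnn]
      simp [Ne.symm hq]
    · simp
  have key : (∑ k, ∑ p, ∑ q, ∑ i, ∑ j, h p k i * h q k j * Snn p q * V i * V j)
      = ∑ k, ∑ p, Snn p p * (A p k)^2 := by
    refine Finset.sum_congr rfl fun k _ => Finset.sum_congr rfl fun p _ => ?_
    rw [← collapse p k]
    exact Finset.sum_congr rfl fun q _ => inner p q k
  have eq1 : -2 * ∑ k, ∑ p, ∑ q, ∑ i, ∑ j, h p k i * h q k j * Snn p q * V i * V j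
      = (∑ k, ∑ p ∈ univ.filter (fun p : Fin n => (p : ℕ) < r),
          2 * (1 - l p ^ 2) / (1 + l p ^ 2) * (A p k) ^ 2)
        + ∑ k, ∑ p ∈ univ.filter (fun p : Fin n => r ≤ (p : ℕ)),
            2 * (A p k) ^ 2 := by
    rw [key, Finset.mul_sum, ← Finset.sum_add_distrib]
    refine Finset.sum_congr rfl fun k _ => ?_
    rw [Finset.mul_sum]
    have hsplit := Finset.sum_filter_add_sum_filter_not Finset.univ
      (fun p : Fin n => (p : ℕ) < r) (fun p => -2 * (Snn p p * (A p k)^2))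
    rw [← hsplit]
    congr 1
    · refine Finset.sum_congr rfl fun p hp => ?_
      rw [Finset.mem_filter] at hp
      have hS := hSnn p p
      rw [if_pos rfl, if_pos hp.2] at hS
      rw [hS]; ring
    · refine Finset.sum_congr (by ext p; simp [not_lt]) fun p hp => ?_
      rw [Finset.mem_filter] at hp
      have hS := hSnn p p
      rw [if_pos rfl, if_neg (not_lt.mpr hp.2)] at hS
      rw [hS]; ring
  refine ⟨eq1, ?_⟩
  rw [eq1]
  have h1 : 0 ≤ ∑ k, ∑ p ∈ univ.filter (fun p : Fin n => (p : ℕ) < r),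
      2 * (1 - l p ^ 2) / (1 + l p ^ 2) * (A p k) ^ 2 := by
    refine Finset.sum_nonneg fun k _ => Finset.sum_nonneg fun p hp => ?_
    rw [Finset.mem_filter] at hp
    have h2 : 0 ≤ (1 - l p ^ 2) / (1 + l p ^ 2) := le_trans hε (hpos p hp.2)
    have : 2 * (1 - l p ^ 2) / (1 + l p ^ 2) = 2 * ((1 - l p ^ 2) / (1 + l p ^ 2)) := by
      ring
    rw [this]
    positivity
  have h2 : 0 ≤ ∑ k, ∑ p ∈ univ.filter (fun p : Fin n => r ≤ (p : ℕ)),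
      2 * (A p k) ^ 2 := by
    refine Finset.sum_nonneg fun k _ => Finset.sum_nonneg fun p _ => by positivity
  linarith
end

section
/- Suppose 0 < λ₂ ≤ λ₁ with λ₁λ₂ < 1, and set S₁₁ = (1-λ₁²)/(1+λ₁²) < 0 < S₂₂ = (1-λ₂²)/(1+λ₂²). If reals a, b satisfy (λ₁/(1+λ₁²))a + (λ₂/(1+λ₂²))b = 0, then 4a²S₁₁ + 4b²S₂₂ ≥ 0. -/
/-- Combination of (5.9), (5.14), (5.15): the gradient condition and `S₁₁ + S₂₂ > 0`
with `S₁₁ < 0 < S₂₂` give `4a²S₁₁ + 4b²S₂₂ ≥ 0`. -/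
theorem combined_positivity (l₁ l₂ : ℝ) (h₂ : 0 < l₂) (h₁₂ : l₂ ≤ l₁)
    (harea : l₁ * l₂ < 1)
    (hS1 : (1 - l₁ ^ 2) / (1 + l₁ ^ 2) < 0) (hS2 : 0 < (1 - l₂ ^ 2) / (1 + l₂ ^ 2))
    (a b : ℝ) (hab : l₁ / (1 + l₁ ^ 2) * a + l₂ / (1 + l₂ ^ 2) * b = 0) :
    0 ≤ 4 * a ^ 2 * ((1 - l₁ ^ 2) / (1 + l₁ ^ 2))
        + 4 * b ^ 2 * ((1 - l₂ ^ 2) / (1 + l₂ ^ 2)) := by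
  have h₁ : 0 < l₁ := lt_of_lt_of_le h₂ h₁₂
  have d₁ : (0:ℝ) < 1 + l₁ ^ 2 := by positivity
  have d₂ : (0:ℝ) < 1 + l₂ ^ 2 := by positivity
  have hab' : l₁ * (1 + l₂ ^ 2) * a = -(l₂ * (1 + l₁ ^ 2) * b) := by
    field_simp at hab; linarith
  have hsq : l₁ ^ 2 * (1 + l₂ ^ 2) ^ 2 * a ^ 2 = l₂ ^ 2 * (1 + l₁ ^ 2) ^ 2 * b ^ 2 := by
    have h : (l₁ * (1 + l₂ ^ 2) * a) ^ 2 = (l₂ * (1 + l₁ ^ 2) * b) ^ 2 := by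
      rw [hab']; ring
    nlinarith [h]
  have hprod : 0 < 1 - l₁ ^ 2 * l₂ ^ 2 := by nlinarith [mul_pos h₁ h₂]
  have key : 0 ≤ 4 * a ^ 2 * (1 - l₁ ^ 2) * (1 + l₂ ^ 2)
      + 4 * b ^ 2 * (1 - l₂ ^ 2) * (1 + l₁ ^ 2) := by
    have hmul : 0 ≤ l₁ ^ 2 * (1 + l₂ ^ 2) ^ 2 *
        (4 * a ^ 2 * (1 - l₁ ^ 2) * (1 + l₂ ^ 2)
          + 4 * b ^ 2 * (1 - l₂ ^ 2) * (1 + l₁ ^ 2)) := by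
      nlinarith [mul_nonneg (mul_nonneg (sq_nonneg b) (le_of_lt d₁)) (le_of_lt d₂),
        mul_nonneg (mul_nonneg (mul_nonneg (sq_nonneg b) (le_of_lt d₁)) (le_of_lt d₂))
          (mul_nonneg (by positivity : (0:ℝ) ≤ l₁ ^ 2 + l₂ ^ 2) (le_of_lt hprod))]
    exact nonneg_of_mul_nonneg_right hmul (by positivity)
  have heq : 4 * a ^ 2 * ((1 - l₁ ^ 2) / (1 + l₁ ^ 2))
        + 4 * b ^ 2 * ((1 - l₂ ^ 2) / (1 + l₂ ^ 2))
      = (4 * a ^ 2 * (1 - l₁ ^ 2) * (1 + l₂ ^ 2)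
          + 4 * b ^ 2 * (1 - l₂ ^ 2) * (1 + l₁ ^ 2)) / ((1 + l₁ ^ 2) * (1 + l₂ ^ 2)) := by
    field_simp
  rw [heq]
  exact div_nonneg key (by positivity)
end
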